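/- Fix m ≥ 1. The map sending a tuple (A_1, …, A_m) ∈ {x, x+1}^m to the pair (F_m, F_{m−1}) of its Fibonacci polynomials is injective; consequently there are exactly 2^m distinct pairs (F_m, F_{m−1}) arising from Fibonacci polynomials of length m. -/
import Mathlib


open Polynomial

/-- The Fibonacci polynomials over `𝔽₂` associated to a sequence of partial
quotients `A`: `F 0 = 1`, `F 1 = A 1`, `F (k+2) = A (k+2) * F (k+1) + F k`. -/
noncomputable def fibPoly (A : ℕ → Polynomial (ZMod 2)) : ℕ → Polynomial (ZMod 2)
  | 0 => 1
  | 1 => A 1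
  | (k + 2) => A (k + 2) * fibPoly A (k + 1) + fibPoly A k

lemma fibPoly_congr : ∀ (n : ℕ) (A B : ℕ → Polynomial (ZMod 2)),
    (∀ k, 1 ≤ k → k ≤ n → A k = B k) → fibPoly A n = fibPoly B n
  | 0, A, B, h => rfl
  | 1, A, B, h => h 1 le_rfl le_rfl
  | (n+2), A, B, h => by
    show A (n+2) * fibPoly A (n+1) + fibPoly A n
        = B (n+2) * fibPoly B (n+1) + fibPoly B n
    rw [h (n+2) (by omega) le_rfl,
        fibPoly_congr (n+1) A B (fun k h1 h2 => h k h1 (by omega)),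
        fibPoly_congr n A B (fun k h1 h2 => h k h1 (by omega))]

lemma degree_X_add_one : (X + 1 : Polynomial (ZMod 2)).degree = 1 := by
  rw [show (X + 1 : Polynomial (ZMod 2)) = X + C 1 by rw [C_1]]
  exact degree_X_add_C 1

lemma fibPoly_degree : ∀ (n : ℕ) (A : ℕ → Polynomial (ZMod 2)),
    (∀ k, 1 ≤ k → k ≤ n → A k = X ∨ A k = X + 1) →
    (fibPoly A n).degree = n
  | 0, A, h => by simp [fibPoly]
  | 1, A, h => by
    rcases h 1 le_rfl le_rfl with h1 | h1 <;>
      simp [fibPoly, h1, degree_X_add_one]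
  | (n+2), A, h => by
    have h1 := fibPoly_degree (n+1) A (fun k a b => h k a (by omega))
    have h0 := fibPoly_degree n A (fun k a b => h k a (by omega))
    have hA : (A (n+2)).degree = 1 := by
      rcases h (n+2) (by omega) le_rfl with e | e <;> rw [e]
      · exact degree_X
      · rw [show (X + 1 : Polynomial (ZMod 2)) = X + C 1 by rw [C_1]]
        exact degree_X_add_C 1
    have hmul : (A (n+2) * fibPoly A (n+1)).degree = ((n+2 : ℕ) : WithBot ℕ) := by
      rw [degree_mul, hA, h1]
      norm_cast
      omega
    show (A (n+2) * fibPoly A (n+1) + fibPoly A n).degree = ((n+2 : ℕ) : WithBot ℕ)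
    rw [degree_add_eq_left_of_degree_lt, hmul]
    rw [hmul, h0]
    exact_mod_cast (by omega : n < n + 2)

lemma fib_inj : ∀ (n : ℕ) (A B : ℕ → Polynomial (ZMod 2)),
    (∀ k, 1 ≤ k → k ≤ n+1 → A k = X ∨ A k = X + 1) →
    (∀ k, 1 ≤ k → k ≤ n+1 → B k = X ∨ B k = X + 1) →
    fibPoly A (n+1) = fibPoly B (n+1) → fibPoly A n = fibPoly B n →
    ∀ k, 1 ≤ k → k ≤ n+1 → A k = B k := by
  intro n
  induction n with
  | zero =>
    intro A B hA hB h1 h0 k hk1 hk2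
    interval_cases k
    exact h1
  | succ n ih =>
    intro A B hA hB h2 h1 k hk1 hk2
    have hrec : A (n+2) * fibPoly A (n+1) + fibPoly A n
        = B (n+2) * fibPoly B (n+1) + fibPoly B n := h2
    rw [h1] at hrec
    have hAB : A (n+2) = B (n+2) := by
      by_contra hne
      have hd : (fibPoly B (n+1)).degree = ((n+1 : ℕ) : WithBot ℕ) :=
        fibPoly_degree (n+1) B (fun k a b => hB k a (by omega))
      have hone : A (n+2) - B (n+2) = 1 := by
        rcases hA (n+2) (by omega) le_rfl with eA | eA <;>
          rcases hB (n+2) (by omega) le_rfl with eB | eB <;>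
            rw [eA, eB] at hne ⊢
        · exact absurd rfl hne
        · rw [show (X : Polynomial (ZMod 2)) - (X + 1) = -1 by ring]
          exact CharTwo.neg_eq 1
        · ring
        · exact absurd rfl hne
      have e : (A (n+2) - B (n+2)) * fibPoly B (n+1)
          = fibPoly B n - fibPoly A n := by linear_combination hrec
      rw [hone, one_mul] at e
      have hle : ((n+1 : ℕ) : WithBot ℕ) ≤ (n : ℕ) := by
        calc ((n+1 : ℕ) : WithBot ℕ) = (fibPoly B (n+1)).degree := hd.symm
          _ = (fibPoly B n - fibPoly A n).degree := by rw [e]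
          _ ≤ max (fibPoly B n).degree (fibPoly A n).degree := degree_sub_le _ _
          _ ≤ (n : ℕ) := by
              rw [fibPoly_degree n B (fun k a b => hB k a (by omega)),
                fibPoly_degree n A (fun k a b => hA k a (by omega))]
              simp
      exact absurd hle (by exact_mod_cast (by omega : ¬ (n+1 ≤ n)))
    have hFn : fibPoly A n = fibPoly B n := by
      rw [hAB] at hrec
      exact add_left_cancel hrec
    rcases Nat.lt_or_ge k (n+2) with hk | hk
    · exact ih A B (fun j a b => hA j a (by omega)) (fun j a b => hB j a (by omega))
        h1 hFn k hk1 (by omega)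
    · have hk' : k = n + 2 := by omega
      rw [hk']
      exact hAB

lemma X_ne_X_add_one : (X : Polynomial (ZMod 2)) ≠ X + 1 := by
  intro h
  exact one_ne_zero (left_eq_add.mp h)

noncomputable def tupA (m : ℕ) (b : Fin m → Bool) : ℕ → Polynomial (ZMod 2) :=
  fun k => if h : 1 ≤ k ∧ k ≤ m then (if b ⟨k - 1, by omega⟩ then X + 1 else X) else X

lemma tupA_mem (m : ℕ) (b : Fin m → Bool) :
    ∀ k, 1 ≤ k → k ≤ m → tupA m b k = X ∨ tupA m b k = X + 1 := by
  intro k h1 h2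
  unfold tupA
  rw [dif_pos ⟨h1, h2⟩]
  split
  · right; rfl
  · left; rfl

theorem fibPoly_pair_injective_card (m : ℕ) (hm : 1 ≤ m) :
    (∀ A B : ℕ → Polynomial (ZMod 2),
      (∀ k, 1 ≤ k → k ≤ m → A k = X ∨ A k = X + 1) →
      (∀ k, 1 ≤ k → k ≤ m → B k = X ∨ B k = X + 1) →
      fibPoly A m = fibPoly B m → fibPoly A (m - 1) = fibPoly B (m - 1) →
      ∀ k, 1 ≤ k → k ≤ m → A k = B k) ∧
    Set.ncard {pq : Polynomial (ZMod 2) × Polynomial (ZMod 2) |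
      ∃ A : ℕ → Polynomial (ZMod 2),
        (∀ k, 1 ≤ k → k ≤ m → A k = X ∨ A k = X + 1) ∧
        pq = (fibPoly A m, fibPoly A (m - 1))} = 2 ^ m := by
  classical
  obtain ⟨n, rfl⟩ : ∃ n, m = n + 1 := ⟨m - 1, by omega⟩
  simp only [Nat.add_sub_cancel]
  constructor
  · intro A B hA hB h2 h1 k hk1 hk2
    exact fib_inj n A B hA hB h2 h1 k hk1 hk2
  · set f : (Fin (n+1) → Bool) → Polynomial (ZMod 2) × Polynomial (ZMod 2) :=
      fun b => (fibPoly (tupA (n+1) b) (n+1), fibPoly (tupA (n+1) b) n) with hf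
    have hset : {pq : Polynomial (ZMod 2) × Polynomial (ZMod 2) |
        ∃ A : ℕ → Polynomial (ZMod 2),
          (∀ k, 1 ≤ k → k ≤ n+1 → A k = X ∨ A k = X + 1) ∧
          pq = (fibPoly A (n+1), fibPoly A n)} = Set.range f := by
      ext pq
      simp only [Set.mem_setOf_eq, Set.mem_range, hf]
      constructor
      · rintro ⟨A, hA, rfl⟩
        refine ⟨fun i => decide (A (↑i + 1) = X + 1), ?_⟩
        have hag : ∀ k, 1 ≤ k → k ≤ n+1 →
            tupA (n+1) (fun i => decide (A (↑i + 1) = X + 1)) k = A k := by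
          intro k h1 h2
          unfold tupA
          rw [dif_pos ⟨h1, h2⟩]
          have hk : (k - 1) + 1 = k := by omega
          rcases hA k h1 h2 with e | e
          · rw [if_neg]
            · exact e.symm
            · simp only [hk, e, decide_eq_true_eq]
              exact fun h => X_ne_X_add_one h
          · rw [if_pos]
            · exact e.symm
            · simp [hk, e]
        have e1 := fibPoly_congr (n+1) _ A hag
        have e0 := fibPoly_congr n _ A (fun k a b => hag k a (by omega))
        rw [e1, e0]
      · rintro ⟨b, rfl⟩
        exact ⟨tupA (n+1) b, tupA_mem _ _, rfl⟩
    have hinj : Function.Injective f := by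
      intro b b' h
      have h1 : fibPoly (tupA (n+1) b) (n+1) = fibPoly (tupA (n+1) b') (n+1) :=
        congrArg Prod.fst h
      have h0 : fibPoly (tupA (n+1) b) n = fibPoly (tupA (n+1) b') n :=
        congrArg Prod.snd h
      have key := fib_inj n _ _ (tupA_mem _ b) (tupA_mem _ b') h1 h0
      funext i
      have hi : (i : ℕ) < n + 1 := i.isLt
      have hk := key (↑i + 1) (by omega) (by omega)
      unfold tupA at hk
      rw [dif_pos ⟨by omega, by omega⟩, dif_pos ⟨by omega, by omega⟩] at hk
      simp only [Nat.add_sub_cancel, Fin.eta] at hk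
      cases hb : b i <;> cases hb' : b' i <;> rw [hb, hb'] at hk <;> first
        | rfl
        | exact absurd hk.symm X_ne_X_add_one
        | exact absurd hk X_ne_X_add_one
    rw [hset, ← Nat.card_coe_set_eq, Nat.card_range_of_injective hinj]
    simp [Nat.card_eq_fintype_card]
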